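/- Let ξ₁ > 1 > ξ₂ > 0 be the roots of q₀ξ² - (p₀+q₀+Ns₀)ξ + p₀ = 0 where p₀, q₀, s₀ > 0, r₀ ≥ 0, p₀+q₀+r₀+s₀ = 1, N > 1 integer. Let D = √((p₀+q₀+Ns₀)² - 4p₀q₀), let 0 ≤ i₀ < N, and define x_{kN} = ((i₀q₀ξ₂/p₀) + N - i₀)ξ₁^k / D for k ≤ 0 and x_{kN} = ((i₀q₀ξ₁/p₀) + N - i₀)ξ₂^k / D for k ≥ 1. Then for all integers k, q₀x_{(k+1)N} - (p₀+q₀+Ns₀)x_{kN} + p₀x_{(k-1)N} = (i₀-N)δ(k,0) - i₀δ(k,1), where δ is the Kronecker delta. -/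

import Mathlib

theorem stmt_6 (p₀ q₀ r₀ s₀ : ℝ) (N : ℕ) (i₀ : ℤ) (ξ₁ ξ₂ D : ℝ)
    (hp : 0 < p₀) (hq : 0 < q₀) (hs : 0 < s₀) (hr : 0 ≤ r₀)
    (hsum : p₀ + q₀ + r₀ + s₀ = 1) (hN : 1 < N) (hi₀ : 0 ≤ i₀) (hi₀N : i₀ < N)
    (hξ₁ : q₀ * ξ₁ ^ 2 - (p₀ + q₀ + N * s₀) * ξ₁ + p₀ = 0) (hξ₁1 : ξ₁ > 1)
    (hξ₂ : q₀ * ξ₂ ^ 2 - (p₀ + q₀ + N * s₀) * ξ₂ + p₀ = 0) (hξ₂1 : ξ₂ < 1) (hξ₂0 : 0 < ξ₂)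
    (hD : D = Real.sqrt ((p₀ + q₀ + N * s₀) ^ 2 - 4 * p₀ * q₀))
    (x : ℤ → ℝ)
    (hx : ∀ k : ℤ, x k = if k ≤ 0
      then ((i₀ * q₀ * ξ₂ / p₀) + N - i₀) * ξ₁ ^ k / D
      else ((i₀ * q₀ * ξ₁ / p₀) + N - i₀) * ξ₂ ^ k / D) :
    ∀ k : ℤ, q₀ * x (k + 1) - (p₀ + q₀ + N * s₀) * x k + p₀ * x (k - 1) =
      ((i₀ : ℝ) - N) * (if k = 0 then 1 else 0) - i₀ * (if k = 1 then 1 else 0) := by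
  have hξ₁0 : (0:ℝ) < ξ₁ := lt_trans one_pos hξ₁1
  have hlt : ξ₂ < ξ₁ := lt_trans hξ₂1 hξ₁1
  have hsub : (0:ℝ) < ξ₁ - ξ₂ := sub_pos.mpr hlt
  have hVsum : p₀ + q₀ + N * s₀ = q₀ * (ξ₁ + ξ₂) := by
    have h : (q₀ * (ξ₁ + ξ₂) - (p₀ + q₀ + N * s₀)) * (ξ₁ - ξ₂) = 0 := by
      linear_combination hξ₁ - hξ₂
    rcases mul_eq_zero.mp h with h | h
    · linarith
    · exact absurd h (ne_of_gt hsub)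
  have hVprod : p₀ = q₀ * ξ₁ * ξ₂ := by
    linear_combination hξ₁ + ξ₁ * hVsum
  have hDval : D = q₀ * (ξ₁ - ξ₂) := by
    have hdisc : (p₀ + q₀ + N * s₀) ^ 2 - 4 * p₀ * q₀ = (q₀ * (ξ₁ - ξ₂)) ^ 2 := by
      rw [hVsum, hVprod]; ring
    rw [hD, hdisc, Real.sqrt_sq (le_of_lt (mul_pos hq hsub))]
  have hD0 : (0:ℝ) < D := hDval ▸ mul_pos hq hsub
  have helper : ∀ (ξ : ℝ), ξ ≠ 0 → q₀ * ξ ^ 2 - (p₀ + q₀ + N * s₀) * ξ + p₀ = 0 →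
      ∀ m : ℤ, q₀ * ξ ^ (m + 1) - (p₀ + q₀ + N * s₀) * ξ ^ m + p₀ * ξ ^ (m - 1) = 0 := by
    intro ξ hξ hroot m
    have e2 : ξ ^ m = ξ ^ (m - 1) * ξ := by
      rw [← zpow_add_one₀ hξ, sub_add_cancel]
    have e1 : ξ ^ (m + 1) = ξ ^ (m - 1) * ξ * ξ := by
      rw [zpow_add_one₀ hξ, e2]
    rw [e1, e2]
    linear_combination ξ ^ (m - 1) * hroot
  intro k
  rcases lt_trichotomy k 0 with hk | rfl | hk
  · rw [hx (k + 1), hx k, hx (k - 1),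
      if_pos (by omega : k + 1 ≤ 0), if_pos (by omega : k ≤ 0), if_pos (by omega : k - 1 ≤ 0),
      if_neg (by omega : ¬ k = 0), if_neg (by omega : ¬ k = 1)]
    have h := helper ξ₁ (ne_of_gt hξ₁0) hξ₁ k
    linear_combination ((↑i₀ * q₀ * ξ₂ / p₀ + ↑N - ↑i₀) / D) * h
  · rw [hx (0 + 1), hx 0, hx (0 - 1)]
    norm_num
    rw [hVsum, hVprod, hDval]
    field_simp
    ring
  · rcases eq_or_lt_of_le (Int.add_one_le_iff.mpr hk) with rfl | hk2
    · rw [show (0:ℤ) + 1 = 1 from rfl, hx (1 + 1), hx 1, hx (1 - 1)]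
      norm_num
      rw [hVsum, hVprod, hDval]
      field_simp
      ring
    · rw [hx (k + 1), hx k, hx (k - 1),
        if_neg (by omega : ¬ k + 1 ≤ 0), if_neg (by omega : ¬ k ≤ 0),
        if_neg (by omega : ¬ k - 1 ≤ 0),
        if_neg (by omega : ¬ k = 0), if_neg (by omega : ¬ k = 1)]
      have h := helper ξ₂ (ne_of_gt hξ₂0) hξ₂ k
      linear_combination ((↑i₀ * q₀ * ξ₁ / p₀ + ↑N - ↑i₀) / D) * h
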